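/- (Uniform KL closeness along coupled iterates.) Fix κ > 0 and α_min > 0. Let Q_{t+1}^{(i)} = T_{α_t} Q_t^{(i)} for i ∈ {1,2} be coupled iterates driven by the shared disagreement-scaled temperature α_t(s) = max{α_min, (max_{a∈A} |Q_t^{(1)}(s,a) − Q_t^{(2)}(s,a)|)/κ}. For each t ≥ 0 and each state s ∈ S, let π_t^{(i)}(·|s) be the Boltzmann policy on A at temperature α_t(s) induced by the action-value vector Q_t^{(i)}(s,·). Then for every t ≥ 0 and every s ∈ S, D_KL(π_t^{(1)}(·|s) ‖ π_t^{(2)}(·|s)) ≤ 2κ. -/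

import Mathlib

open Finset Real

/-- The soft Bellman operator at temperature function `α`:
`(T_α Q)(s,a) = r(s,a) + γ·∑_{s'} P(s'|s,a)·α(s')·log(∑_{a'} exp(Q(s',a')/α(s')))`. -/
noncomputable def softBellman {S A : Type*} [Fintype S] [Fintype A]
    (r : S → A → ℝ) (γ : ℝ) (P : S → A → S → ℝ) (α : S → ℝ)
    (Q : S → A → ℝ) (s : S) (a : A) : ℝ :=
  r s a + γ * ∑ s', P s a s' * (α s' * Real.log (∑ a', Real.exp (Q s' a' / α s')))

/-- The Boltzmann policy at temperature `α` induced by `Q : A → ℝ`: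
`π(a) = exp(Q(a)/α) / ∑_b exp(Q(b)/α)`. -/
noncomputable def boltzmann {A : Type*} [Fintype A] (Q : A → ℝ) (α : ℝ) (a : A) : ℝ :=
  Real.exp (Q a / α) / ∑ b, Real.exp (Q b / α)

/-- KL divergence between two probability distributions on a finite set:
`D_KL(p‖q) = ∑_a p(a)·log(p(a)/q(a))`. -/
noncomputable def klDiv {A : Type*} [Fintype A] (p q : A → ℝ) : ℝ :=
  ∑ a, p a * Real.log (p a / q a)

/-- Uniform KL closeness along coupled iterates: for coupled soft value iterates
driven by the shared disagreement-scaled temperature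
`α_t(s) = max{α_min, (max_a |Q_t¹(s,a) − Q_t²(s,a)|)/κ}`, the induced Boltzmann
policies satisfy `D_KL(π_t¹(·|s) ‖ π_t²(·|s)) ≤ 2κ` for every `t` and `s`. -/
theorem uniform_kl_closeness {S A : Type*}
    [Fintype S] [Fintype A] [Nonempty S] [Nonempty A]
    (r : S → A → ℝ) (γ : ℝ) (hγ0 : 0 < γ) (hγ1 : γ < 1)
    (P : S → A → S → ℝ) (hP : ∀ s a s', 0 ≤ P s a s')
    (hP1 : ∀ s a, ∑ s', P s a s' = 1)
    (κ αmin : ℝ) (hκ : 0 < κ) (hαmin : 0 < αmin)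
    (Q1 Q2 : ℕ → S → A → ℝ)
    (αseq : ℕ → S → ℝ)
    (hαseq : ∀ t s, αseq t s =
      max αmin ((Finset.univ.sup' Finset.univ_nonempty fun a => |Q1 t s a - Q2 t s a|) / κ))
    (hQ1 : ∀ t, Q1 (t + 1) = softBellman r γ P (αseq t) (Q1 t))
    (hQ2 : ∀ t, Q2 (t + 1) = softBellman r γ P (αseq t) (Q2 t)) :
    ∀ (t : ℕ) (s : S),
      klDiv (boltzmann (Q1 t s) (αseq t s)) (boltzmann (Q2 t s) (αseq t s)) ≤ 2 * κ := by
  intro t s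
  set α := αseq t s with hαdef
  set M := (Finset.univ.sup' Finset.univ_nonempty fun a => |Q1 t s a - Q2 t s a|) with hMdef
  have hαeq : α = max αmin (M / κ) := hαseq t s
  have hαpos : 0 < α := lt_of_lt_of_le hαmin (hαeq ▸ le_max_left _ _)
  have hMκ : M ≤ κ * α := by
    have h : M / κ ≤ α := hαeq ▸ le_max_right _ _
    have := (div_le_iff₀ hκ).mp h
    linarith
  have hbound : ∀ a, |Q1 t s a - Q2 t s a| ≤ M := fun a =>
    Finset.le_sup' (fun a => |Q1 t s a - Q2 t s a|) (Finset.mem_univ a)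
  set f := Q1 t s with hf
  set g := Q2 t s with hg
  set Z1 := ∑ b, Real.exp (f b / α) with hZ1
  set Z2 := ∑ b, Real.exp (g b / α) with hZ2
  have hZ1pos : 0 < Z1 := Finset.sum_pos (fun b _ => Real.exp_pos _) Finset.univ_nonempty
  have hZ2pos : 0 < Z2 := Finset.sum_pos (fun b _ => Real.exp_pos _) Finset.univ_nonempty
  have hlogZ : Real.log Z2 - Real.log Z1 ≤ M / α := by
    have h1 : Z2 ≤ Real.exp (M / α) * Z1 := by
      rw [hZ2, hZ1, Finset.mul_sum]
      apply Finset.sum_le_sum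
      intro b _
      rw [← Real.exp_add]
      apply Real.exp_le_exp.2
      rw [← add_div]
      have := abs_le.1 (hbound b)
      gcongr
      linarith [this.2]
    have := Real.log_le_log hZ2pos h1
    rw [Real.log_mul (Real.exp_ne_zero _) (ne_of_gt hZ1pos), Real.log_exp] at this
    linarith
  have hlog : ∀ a, Real.log (boltzmann f α a / boltzmann g α a) ≤ 2 * M / α := by
    intro a
    have hp : boltzmann f α a = Real.exp (f a / α) / Z1 := rfl
    have hq : boltzmann g α a = Real.exp (g a / α) / Z2 := rfl
    rw [hp, hq, Real.log_div (div_ne_zero (Real.exp_ne_zero _) (ne_of_gt hZ1pos))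
        (div_ne_zero (Real.exp_ne_zero _) (ne_of_gt hZ2pos)),
      Real.log_div (Real.exp_ne_zero _) (ne_of_gt hZ1pos),
      Real.log_div (Real.exp_ne_zero _) (ne_of_gt hZ2pos),
      Real.log_exp, Real.log_exp]
    have h1 : (f a - g a) / α ≤ M / α := by
      have := abs_le.1 (hbound a)
      gcongr
      linarith [this.2]
    have : f a / α - g a / α = (f a - g a) / α := by ring
    rw [show f a / α - Real.log Z1 - (g a / α - Real.log Z2)
        = (f a / α - g a / α) + (Real.log Z2 - Real.log Z1) by ring, this]
    have : 2 * M / α = M / α + M / α := by ring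
    linarith
  have hppos : ∀ a, 0 ≤ boltzmann f α a := fun a =>
    le_of_lt (div_pos (Real.exp_pos _) hZ1pos)
  have hsum : ∑ a, boltzmann f α a = 1 := by
    simp only [boltzmann]
    rw [← Finset.sum_div, ← hZ1]
    exact div_self (ne_of_gt hZ1pos)
  have hKL : klDiv (boltzmann f α) (boltzmann g α) ≤ 2 * M / α := by
    calc klDiv (boltzmann f α) (boltzmann g α)
        ≤ ∑ a, boltzmann f α a * (2 * M / α) := by
          apply Finset.sum_le_sum
          intro a _
          exact mul_le_mul_of_nonneg_left (hlog a) (hppos a)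
      _ = 2 * M / α := by rw [← Finset.sum_mul, hsum, one_mul]
  have hfin : 2 * M / α ≤ 2 * κ := by
    rw [div_le_iff₀ hαpos]
    nlinarith
  exact hKL.trans hfin
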